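/- Let π be a torsion-free group and let π' be a characteristic finite-index subgroup of π. If π' is weakly characteristically potent, then π is weakly characteristically potent. -/

import Mathlib

/-- A monoid is torsion-free if no non-identity element has finite order
(the removed Mathlib definition `Monoid.IsTorsionFree`, restated with its old meaning). -/
def Monoid.IsTorsionFree (G : Type*) [Monoid G] : Prop :=
  ∀ g : G, g ≠ 1 → ¬IsOfFinOrder g

/-- A group `π` is weakly characteristically potent if for every `g ≠ 1` there is an
integer `r ≥ 1` such that for every `n ≥ 1` there is a characteristic finite-index
subgroup `π'` of `π` such that the image of `g` in `π/π'` has order exactly `r·n`. -/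
def WeaklyCharacteristicallyPotent (π : Type) [Group π] : Prop :=
  ∀ g : π, g ≠ 1 → ∃ r : ℕ, 0 < r ∧ ∀ n : ℕ, 0 < n →
    ∃ (π' : Subgroup π) (_ : π'.Characteristic), π'.FiniteIndex ∧
      orderOf ((QuotientGroup.mk' π') g) = r * n

/-- If a torsion-free group `π` has a characteristic finite-index subgroup `π'` which is
weakly characteristically potent, then `π` is weakly characteristically potent. -/

lemma char_map_char {G : Type*} [Group G] (K : Subgroup G) (hK : K.Characteristic)
    (H : Subgroup K) (hH : H.Characteristic) : (H.map K.subtype).Characteristic := by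
  rw [Subgroup.characteristic_iff_map_eq]
  intro φ
  have hKm : K.map φ.toMonoidHom = K := Subgroup.characteristic_iff_map_eq.mp hK φ
  let φ' : K ≃* K := (φ.subgroupMap K).trans (MulEquiv.subgroupCongr hKm)
  have hHm : H.map φ'.toMonoidHom = H := Subgroup.characteristic_iff_map_eq.mp hH φ'
  have hcomp : φ.toMonoidHom.comp K.subtype = K.subtype.comp φ'.toMonoidHom := by
    ext x; rfl
  rw [Subgroup.map_map, hcomp, ← Subgroup.map_map, hHm]


theorem wcp_of_characteristic_finiteIndex_wcp
    {π : Type} [Group π] (htf : Monoid.IsTorsionFree π)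
    (π' : Subgroup π) (hchar : π'.Characteristic) (hfi : π'.FiniteIndex)
    (hwcp : WeaklyCharacteristicallyPotent ↥π') :
    WeaklyCharacteristicallyPotent π := by
  haveI := hchar
  haveI := hfi
  intro g hg
  set k := orderOf ((QuotientGroup.mk' π') g) with hkdef
  have hk : 0 < k := orderOf_pos _
  have hgk : g ^ k ∈ π' := by
    rw [← QuotientGroup.eq_one_iff]
    exact_mod_cast pow_orderOf_eq_one ((QuotientGroup.mk' π') g)
  have hgk1 : (⟨g ^ k, hgk⟩ : π') ≠ 1 := by
    intro h
    have : g ^ k = 1 := congrArg Subtype.val h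
    exact htf g hg (isOfFinOrder_iff_pow_eq_one.mpr ⟨k, hk, this⟩)
  obtain ⟨r, hr, hr'⟩ := hwcp ⟨g ^ k, hgk⟩ hgk1
  refine ⟨k * r, Nat.mul_pos hk hr, fun n hn => ?_⟩
  obtain ⟨H, hHchar, hHfi, hHord⟩ := hr' n hn
  haveI := hHchar
  haveI := hHfi
  refine ⟨H.map π'.subtype, char_map_char π' hchar H hHchar, ?_, ?_⟩
  · constructor
    rw [Subgroup.index_map_subtype]
    exact Nat.mul_ne_zero hHfi.index_ne_zero hfi.index_ne_zero
  · -- order computation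
    set d := orderOf ((QuotientGroup.mk' (H.map π'.subtype)) g) with hddef
    have hmem : ∀ m : ℕ, ((QuotientGroup.mk' (H.map π'.subtype)) g) ^ m = 1 ↔ g ^ m ∈ H.map π'.subtype := by
      intro m
      rw [← map_pow, QuotientGroup.mk'_apply, QuotientGroup.eq_one_iff]
    have hdvd1 : d ∣ k * (r * n) := by
      apply orderOf_dvd_of_pow_eq_one
      rw [hmem]
      have h1 : ((QuotientGroup.mk' H) (⟨g ^ k, hgk⟩ : π')) ^ (r * n) = 1 := by
        rw [← hHord]; exact pow_orderOf_eq_one _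
      rw [← map_pow, QuotientGroup.mk'_apply, QuotientGroup.eq_one_iff] at h1
      rw [pow_mul]
      exact ⟨_, h1, rfl⟩
    have hgd : g ^ d ∈ H.map π'.subtype := by
      rw [← hmem]; exact pow_orderOf_eq_one _
    have hgd' : g ^ d ∈ π' := Subgroup.map_subtype_le H hgd
    have hkd : k ∣ d := by
      apply orderOf_dvd_of_pow_eq_one
      rw [← map_pow, QuotientGroup.mk'_apply, QuotientGroup.eq_one_iff]
      exact hgd'
    obtain ⟨e, he⟩ := hkd
    have hsub : (⟨g ^ k, hgk⟩ : π') ^ e ∈ H := by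
      obtain ⟨h, hh, hval⟩ := (by rw [he, pow_mul] at hgd; exact hgd : (g ^ k) ^ e ∈ H.map π'.subtype)
      have : h = (⟨g ^ k, hgk⟩ : π') ^ e := by
        apply Subtype.ext
        simpa using hval
      rwa [← this]
    have hrne : r * n ∣ e := by
      rw [← hHord]
      apply orderOf_dvd_of_pow_eq_one
      rw [← map_pow, QuotientGroup.mk'_apply, QuotientGroup.eq_one_iff]
      exact hsub
    have hdvd2 : k * (r * n) ∣ d := by
      rw [he]; exact mul_dvd_mul_left k hrne
    rw [hddef] at hdvd1 hdvd2
    rw [← mul_assoc] at hdvd2 hdvd1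
    exact Nat.dvd_antisymm hdvd1 hdvd2
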